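/- Every injective graph homomorphism from the Farey graph F to itself is surjective. -/

import Mathlib

/-- A coprime pair of integers, representing a vertex of the Farey graph. -/
def FareyPair : Type := {p : ℤ × ℤ // IsCoprime p.1 p.2}

/-- The equivalence identifying a coprime pair with its negation. -/
def fareySetoid : Setoid FareyPair where
  r x y := x.val = y.val ∨ x.val = -y.val
  iseqv := by
    refine ⟨fun x => Or.inl rfl, ?_, ?_⟩
    · rintro x y (h | h)
      · exact Or.inl h.symm
      · exact Or.inr (by rw [h, neg_neg])
    · rintro x y z (h1 | h1) (h2 | h2)
      · exact Or.inl (h1.trans h2)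
      · exact Or.inr (by rw [h1, h2])
      · exact Or.inr (by rw [h1, h2])
      · exact Or.inl (by rw [h1, h2, neg_neg])

/-- A vertex of the Farey graph: a coprime pair of integers up to simultaneous
negation. -/
def FareyVertex : Type := Quotient fareySetoid

/-- The vertex `[p:q]` of the Farey graph. -/
def fareyMk (p q : ℤ) (h : IsCoprime p q) : FareyVertex :=
  Quotient.mk fareySetoid ⟨(p, q), h⟩

/-- The determinant `p * s - q * r` of two pairs `(p, q)` and `(r, s)`. -/
def fareyDet (x y : FareyPair) : ℤ := x.val.1 * y.val.2 - x.val.2 * y.val.1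

private lemma farey_abs_helper (a b : ℤ) (h : a = b ∨ a = -b) :
    (|a| = 1) = (|b| = 1) := by
  rcases h with h | h <;> (rw [h]; try simp)

/-- The Farey graph: vertices `[p:q]` and `[r:s]` are adjacent iff `|ps - qr| = 1`. -/
def FareyGraph : SimpleGraph FareyVertex where
  Adj := Quotient.lift₂ (fun x y => |fareyDet x y| = 1) (by
    rintro x y x' y' (h1 | h1) (h2 | h2) <;> apply farey_abs_helper
    · exact Or.inl (by simp only [fareyDet, h1, h2])
    · refine Or.inr ?_
      simp only [fareyDet, h1, h2, Prod.fst_neg, Prod.snd_neg]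
      ring
    · refine Or.inr ?_
      simp only [fareyDet, h1, h2, Prod.fst_neg, Prod.snd_neg]
      ring
    · refine Or.inl ?_
      simp only [fareyDet, h1, h2, Prod.fst_neg, Prod.snd_neg]
      ring)
  symm := by
    constructor
    intro u v
    refine Quotient.inductionOn₂ u v ?_
    intro x y h
    change |fareyDet x y| = 1 at h
    change |fareyDet y x| = 1
    rw [show fareyDet y x = -fareyDet x y from by simp only [fareyDet]; ring,
      abs_neg]
    exact h
  loopless := by
    constructor
    intro u
    refine Quotient.inductionOn u ?_
    intro x h
    change |fareyDet x x| = 1 at h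
    rw [show fareyDet x x = 0 from by simp only [fareyDet]; ring] at h
    simp at h

noncomputable instance : DecidableEq FareyVertex := Classical.decEq _



/-! ### Auxiliary development -/

namespace FareyAux

/-- Determinant of two raw integer pairs. -/
def pd (x y : ℤ × ℤ) : ℤ := x.1 * y.2 - x.2 * y.1

lemma pd_swap (x y : ℤ × ℤ) : pd y x = -pd x y := by simp only [pd]; ring

lemma pd_neg_right (x y : ℤ × ℤ) : pd x (-y) = -pd x y := by
  simp only [pd, Prod.fst_neg, Prod.snd_neg]; ring

lemma pd_add_self (x y : ℤ × ℤ) : pd x (x + y) = pd x y := by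
  simp only [pd, Prod.fst_add, Prod.snd_add]; ring

lemma pd_sub_self (x y : ℤ × ℤ) : pd x (y - x) = pd x y := by
  simp only [pd, Prod.fst_sub, Prod.snd_sub]; ring

lemma pd_sub_left (x y : ℤ × ℤ) : pd (x - y) y = pd x y := by
  simp only [pd, Prod.fst_sub, Prod.snd_sub]; ring

lemma pd_add_left (x y : ℤ × ℤ) : pd (x + y) y = pd x y := by
  simp only [pd, Prod.fst_add, Prod.snd_add]; ring

lemma cop_left {x y : ℤ × ℤ} (h : |pd x y| = 1) : IsCoprime x.1 x.2 := by
  rcases (abs_eq (by norm_num : (0:ℤ) ≤ 1)).mp h with h | h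
  · exact ⟨y.2, -y.1, by simp only [pd] at h; linarith⟩
  · exact ⟨-y.2, y.1, by simp only [pd] at h; linarith⟩

lemma cop_right {x y : ℤ × ℤ} (h : |pd x y| = 1) : IsCoprime y.1 y.2 := by
  apply cop_left (y := x)
  rw [pd_swap, abs_neg]; exact h

-- The vertex associated to a raw pair (junk value if not coprime).
open Classical in
noncomputable def mkv (x : ℤ × ℤ) : FareyVertex :=
  if h : IsCoprime x.1 x.2 then Quotient.mk fareySetoid ⟨x, h⟩
  else Quotient.mk fareySetoid ⟨(1, 0), isCoprime_one_left⟩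

lemma mkv_eq {x : ℤ × ℤ} (h : IsCoprime x.1 x.2) :
    mkv x = Quotient.mk fareySetoid ⟨x, h⟩ := by
  unfold mkv
  exact dif_pos h

lemma exists_mkv (u : FareyVertex) : ∃ x : ℤ × ℤ, IsCoprime x.1 x.2 ∧ u = mkv x := by
  refine Quotient.inductionOn u ?_
  intro p
  obtain ⟨xp, hp⟩ := p
  exact ⟨xp, hp, (mkv_eq hp).symm⟩

lemma mkv_eq_iff {x y : ℤ × ℤ} (hx : IsCoprime x.1 x.2) (hy : IsCoprime y.1 y.2) :
    mkv x = mkv y ↔ (x = y ∨ x = -y) := by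
  rw [mkv_eq hx, mkv_eq hy]
  constructor
  · intro h
    exact Quotient.exact h
  · intro h
    exact Quotient.sound h

lemma mkv_neg (x : ℤ × ℤ) : mkv (-x) = mkv x := by
  by_cases h : IsCoprime x.1 x.2
  · have h' : IsCoprime (-x).1 (-x).2 := by
      simpa only [Prod.fst_neg, Prod.snd_neg] using h.neg_left.neg_right
    rw [mkv_eq h', mkv_eq h]
    exact Quotient.sound (Or.inr rfl)
  · have h' : ¬ IsCoprime (-x).1 (-x).2 := by
      intro hc
      apply h
      simpa only [Prod.fst_neg, Prod.snd_neg, neg_neg] using hc.neg_left.neg_right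
    unfold mkv
    exact (dif_neg h').trans (dif_neg h (t := fun h => Quotient.mk fareySetoid ⟨x, h⟩)
      (e := fun _ => Quotient.mk fareySetoid ⟨(1, 0), isCoprime_one_left⟩)).symm

lemma adj_mkv {x y : ℤ × ℤ} (hx : IsCoprime x.1 x.2) (hy : IsCoprime y.1 y.2) :
    FareyGraph.Adj (mkv x) (mkv y) ↔ |pd x y| = 1 := by
  rw [mkv_eq hx, mkv_eq hy]
  exact Iff.rfl

/-- Triangle predicate. -/
def Tri (u v w : FareyVertex) : Prop :=
  FareyGraph.Adj u v ∧ FareyGraph.Adj u w ∧ FareyGraph.Adj v w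

lemma tri_swap12 {u v w : FareyVertex} (h : Tri u v w) : Tri v u w :=
  ⟨h.1.symm, h.2.2, h.2.1⟩

lemma tri_rot {u v w : FareyVertex} (h : Tri u v w) : Tri v w u :=
  ⟨h.2.2, h.1.symm, h.2.1.symm⟩

lemma tri_swap23 {u v w : FareyVertex} (h : Tri u v w) : Tri u w v :=
  ⟨h.2.1, h.1, h.2.2.symm⟩

lemma tri_mkv {x y : ℤ × ℤ} (h : |pd x y| = 1) :
    Tri (mkv x) (mkv y) (mkv (x + y)) := by
  have h1 : |pd x (x + y)| = 1 := by rw [pd_add_self]; exact h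
  have h2 : |pd y (x + y)| = 1 := by
    rw [show pd y (x + y) = -pd x y from by
      simp only [pd, Prod.fst_add, Prod.snd_add]; ring, abs_neg]
    exact h
  exact ⟨(adj_mkv (cop_left h) (cop_right h)).mpr h,
    (adj_mkv (cop_left h) (cop_right h1)).mpr h1,
    (adj_mkv (cop_right h) (cop_right h2)).mpr h2⟩

lemma tri_mkv_sub {x y : ℤ × ℤ} (h : |pd x y| = 1) :
    Tri (mkv x) (mkv y) (mkv (x - y)) := by
  have h' : |pd x (-y)| = 1 := by rw [pd_neg_right, abs_neg]; exact h
  have := tri_mkv h'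
  rwa [mkv_neg, show x + -y = x - y from by ring] at this

lemma mkv_add_ne_sub {x y : ℤ × ℤ} (h : |pd x y| = 1) :
    mkv (x + y) ≠ mkv (x - y) := by
  intro heq
  have h1 : |pd x (x + y)| = 1 := by rw [pd_add_self]; exact h
  have h2 : |pd x (x - y)| = 1 := by
    rw [show pd x (x - y) = -pd x y from by
      simp only [pd, Prod.fst_sub, Prod.snd_sub]; ring, abs_neg]
    exact h
  rcases (mkv_eq_iff (cop_right h1) (cop_right h2)).mp heq with he | he
  · rw [Prod.ext_iff] at he
    simp only [Prod.fst_add, Prod.snd_add, Prod.fst_sub, Prod.snd_sub] at he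
    have hy1 : y.1 = 0 := by omega
    have hy2 : y.2 = 0 := by omega
    rw [show pd x y = 0 from by simp only [pd, hy1, hy2]; ring] at h
    simp at h
  · rw [Prod.ext_iff] at he
    simp only [Prod.fst_add, Prod.snd_add, Prod.fst_neg, Prod.snd_neg,
      Prod.fst_sub, Prod.snd_sub] at he
    have hx1 : x.1 = 0 := by omega
    have hx2 : x.2 = 0 := by omega
    rw [show pd x y = 0 from by simp only [pd, hx1, hx2]; ring] at h
    simp at h

/-- Common neighbor classification at the level of raw pairs. -/
lemma common (x y z : ℤ × ℤ) (h1 : |pd x y| = 1) (h2 : |pd x z| = 1)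
    (h3 : |pd y z| = 1) :
    z = x + y ∨ z = x - y ∨ z = -(x + y) ∨ z = -(x - y) := by
  have e1 : pd x y * z.1 = pd z y * x.1 + pd x z * y.1 := by
    simp only [pd]; ring
  have e2 : pd x y * z.2 = pd z y * x.2 + pd x z * y.2 := by
    simp only [pd]; ring
  have h3' : |pd z y| = 1 := by
    rw [show pd z y = -pd y z from by simp only [pd]; ring, abs_neg]; exact h3
  rw [abs_eq (by norm_num : (0:ℤ) ≤ 1)] at h1 h2 h3'
  simp only [Prod.ext_iff, Prod.fst_add, Prod.snd_add, Prod.fst_sub,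
    Prod.snd_sub, Prod.fst_neg, Prod.snd_neg]
  rcases h1 with h1 | h1 <;> rcases h2 with h2 | h2 <;> rcases h3' with h3' | h3' <;>
    rw [h1, h2, h3'] at e1 e2 <;> omega

/-- Common neighbor classification at the vertex level. -/
lemma common_v {x y : ℤ × ℤ} {w : FareyVertex} (hxy : |pd x y| = 1)
    (h1 : FareyGraph.Adj (mkv x) w) (h2 : FareyGraph.Adj (mkv y) w) :
    w = mkv (x + y) ∨ w = mkv (x - y) := by
  obtain ⟨z, hz, rfl⟩ := exists_mkv w
  have a1 : |pd x z| = 1 := (adj_mkv (cop_left hxy) hz).mp h1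
  have a2 : |pd y z| = 1 := (adj_mkv (cop_right hxy) hz).mp h2
  rcases common x y z hxy a1 a2 with h | h | h | h
  · left; rw [h]
  · right; rw [h]
  · left; rw [h, mkv_neg]
  · right; rw [h, mkv_neg]

/-- The ordered triangle associated to a pair of raw pairs. -/
noncomputable def TT (x y : ℤ × ℤ) : FareyVertex × FareyVertex × FareyVertex :=
  (mkv x, mkv y, mkv (x + y))

/-- The base triangle. -/
noncomputable def base : FareyVertex × FareyVertex × FareyVertex :=
  TT (1, 0) (0, 1)

/-- Chain-connectivity of triangles. -/
inductive Conn : (FareyVertex × FareyVertex × FareyVertex) →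
    (FareyVertex × FareyVertex × FareyVertex) → Prop where
  | swap : ∀ {u v w}, Tri u v w → Conn (u, v, w) (v, u, w)
  | rot : ∀ {u v w}, Tri u v w → Conn (u, v, w) (v, w, u)
  | flip : ∀ {u v w w'}, Tri u v w → Tri u v w' → Conn (u, v, w) (u, v, w')
  | refl : ∀ {t}, Conn t t
  | symm : ∀ {a b}, Conn a b → Conn b a
  | trans : ∀ {a b c}, Conn a b → Conn b c → Conn a c

lemma conn_swap23 {u v w : FareyVertex} (t : Tri u v w) : Conn (u, v, w) (u, w, v) :=
  (Conn.rot t).trans ((Conn.rot (tri_rot t)).trans (Conn.swap (tri_rot (tri_rot t))))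

lemma L_swap {x y : ℤ × ℤ} (h : |pd x y| = 1) : Conn (TT x y) (TT y x) := by
  unfold TT
  rw [show y + x = x + y from add_comm y x]
  exact Conn.swap (tri_mkv h)

lemma L_negy {x y : ℤ × ℤ} (h : |pd x y| = 1) : Conn (TT x y) (TT x (-y)) := by
  have h' : |pd x (-y)| = 1 := by rw [pd_neg_right, abs_neg]; exact h
  have t2 := tri_mkv h'
  rw [mkv_neg] at t2
  unfold TT
  rw [mkv_neg]
  exact Conn.flip (tri_mkv h) t2

lemma L_negx {x y : ℤ × ℤ} (h : |pd x y| = 1) : Conn (TT x y) (TT (-x) y) := by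
  have h1 : |pd y x| = 1 := by rw [pd_swap, abs_neg]; exact h
  have h2 : |pd y (-x)| = 1 := by rw [pd_neg_right, abs_neg]; exact h1
  exact (L_swap h).trans ((L_negy h1).trans (L_swap h2))

lemma L_addy {x y : ℤ × ℤ} (h : |pd x y| = 1) : Conn (TT x y) (TT x (x + y)) := by
  have h2 : |pd x (x + y)| = 1 := by rw [pd_add_self]; exact h
  have t1 := tri_mkv h
  have t2 := tri_mkv h2
  refine (conn_swap23 t1).trans ?_
  exact Conn.flip (tri_swap23 t1) t2

lemma L_suby {x y : ℤ × ℤ} (h : |pd x y| = 1) : Conn (TT x y) (TT x (y - x)) := by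
  have h2 : |pd x (-y)| = 1 := by rw [pd_neg_right, abs_neg]; exact h
  have h3 : |pd x (x - y)| = 1 := by
    rw [show x - y = x + -y from by ring, pd_add_self]; exact h2
  refine (L_negy h).trans ?_
  have s1 := L_addy h2
  rw [show x + -y = x - y from by ring] at s1
  refine s1.trans ?_
  have s2 := L_negy h3
  rw [show -(x - y) = y - x from by ring] at s2
  exact s2

lemma conn_e1 : ∀ k : ℕ, ∀ r : ℤ, r.natAbs ≤ k → Conn base (TT (1, 0) (r, 1)) := by
  intro k
  induction k with
  | zero =>
    intro r hr
    have : r = 0 := by omega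
    subst this
    exact Conn.refl
  | succ k ih =>
    intro r hr
    rcases lt_trichotomy r 0 with h0 | h0 | h0
    · have ihr := ih (r + 1) (by omega)
      have hd : |pd ((1:ℤ), (0:ℤ)) (r + 1, 1)| = 1 := by simp [pd]
      have step := L_suby hd
      rw [show ((r:ℤ) + 1, (1:ℤ)) - ((1:ℤ), (0:ℤ)) = (r, 1) from by
        rw [Prod.ext_iff]; constructor <;> simp] at step
      exact ihr.trans step
    · subst h0; exact Conn.refl
    · have ihr := ih (r - 1) (by omega)
      have hd : |pd ((1:ℤ), (0:ℤ)) (r - 1, 1)| = 1 := by simp [pd]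
      have step := L_addy hd
      rw [show ((1:ℤ), (0:ℤ)) + ((r:ℤ) - 1, (1:ℤ)) = (r, 1) from by
        rw [Prod.ext_iff]; constructor <;> simp] at step
      exact ihr.trans step

lemma conn_q0' : ∀ p r s : ℤ, (p = 1 ∨ p = -1) → (s = 1 ∨ s = -1) →
    Conn base (TT (p, 0) (r, s)) := by
  have negstep : ∀ r : ℤ, Conn (TT ((1:ℤ), (0:ℤ)) (r, -1)) (TT (1, 0) (-r, 1)) := by
    intro r
    have hd : |pd ((1:ℤ), (0:ℤ)) (r, -1)| = 1 := by simp [pd]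
    have := L_negy hd
    rwa [show -((r:ℤ), (-1:ℤ)) = (-r, 1) from by rw [Prod.ext_iff]; constructor <;> simp]
      at this
  have main1 : ∀ r s : ℤ, (s = 1 ∨ s = -1) → Conn base (TT (1, 0) (r, s)) := by
    intro r s hs
    rcases hs with rfl | rfl
    · exact conn_e1 r.natAbs r le_rfl
    · exact (conn_e1 (-r).natAbs (-r) le_rfl).trans (negstep r).symm
  intro p r s hp hs
  rcases hp with rfl | rfl
  · exact main1 r s hs
  · have hd : |pd ((-1:ℤ), (0:ℤ)) (r, s)| = 1 := by
      rcases hs with rfl | rfl <;> simp [pd]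
    have step := L_negx hd
    rw [show -((-1:ℤ), (0:ℤ)) = ((1:ℤ), (0:ℤ)) from by
      rw [Prod.ext_iff]; constructor <;> simp] at step
    exact (main1 r s hs).trans step.symm

lemma conn_q0 {x y : ℤ × ℤ} (hx2 : x.2 = 0) (h : |pd x y| = 1) :
    Conn base (TT x y) := by
  obtain ⟨p, q⟩ := x
  obtain ⟨r, s⟩ := y
  simp only at hx2
  subst hx2
  have hps : |p * s| = 1 := by
    rw [show p * s = pd (p, 0) (r, s) from by simp [pd]]; exact h
  have hps' : p * s = 1 ∨ p * s = -1 := (abs_eq (by norm_num : (0:ℤ) ≤ 1)).mp hps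
  have hna : p.natAbs * s.natAbs = 1 := by
    rw [← Int.natAbs_mul]
    rcases hps' with h' | h' <;> rw [h'] <;> rfl
  have hp : p = 1 ∨ p = -1 := by
    have h1 := Nat.eq_one_of_mul_eq_one_right hna
    omega
  have hs : s = 1 ∨ s = -1 := by
    have h2 := Nat.eq_one_of_mul_eq_one_left hna
    omega
  exact conn_q0' p r s hp hs

lemma conn_main : ∀ n : ℕ, ∀ x y : ℤ × ℤ, |pd x y| = 1 →
    x.2.natAbs + y.2.natAbs ≤ n → Conn base (TT x y) := by
  intro n
  induction n using Nat.strong_induction_on with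
  | _ n ih =>
  intro x y h hm
  by_cases hx2 : x.2 = 0
  · exact conn_q0 hx2 h
  by_cases hy2 : y.2 = 0
  · have hs : |pd y x| = 1 := by rw [pd_swap, abs_neg]; exact h
    exact (conn_q0 hy2 hs).trans (L_swap hs)
  rcases le_or_gt x.2.natAbs y.2.natAbs with hle | hlt
  · have key : (y.2 - x.2).natAbs < y.2.natAbs ∨ (y.2 + x.2).natAbs < y.2.natAbs := by
      omega
    rcases key with k | k
    · have hd : |pd x (y - x)| = 1 := by rw [pd_sub_self]; exact h
      have hms : x.2.natAbs + (y - x).2.natAbs < n := by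
        simp only [Prod.snd_sub]
        omega
      exact (ih _ hms x (y - x) hd le_rfl).trans (L_suby h).symm
    · have hd : |pd x (y + x)| = 1 := by
        rw [add_comm, pd_add_self]; exact h
      have hms : x.2.natAbs + (y + x).2.natAbs < n := by
        simp only [Prod.snd_add]
        omega
      have step := L_addy h
      rw [show x + y = y + x from add_comm x y] at step
      exact (ih _ hms x (y + x) hd le_rfl).trans step.symm
  · have key : (x.2 - y.2).natAbs < x.2.natAbs ∨ (x.2 + y.2).natAbs < x.2.natAbs := by
      omega
    rcases key with k | k
    · have hd : |pd (x - y) y| = 1 := by rw [pd_sub_left]; exact h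
      have hms : (x - y).2.natAbs + y.2.natAbs < n := by
        simp only [Prod.snd_sub]
        omega
      have c0 := ih _ hms (x - y) y hd le_rfl
      have hd2 : |pd y (x - y)| = 1 := by rw [pd_swap, abs_neg]; exact hd
      have s1 := L_swap hd
      have s2 := L_addy hd2
      rw [show y + (x - y) = x from by ring] at s2
      have hd3 : |pd y x| = 1 := by rw [pd_swap, abs_neg]; exact h
      have s3 := L_swap hd3
      exact c0.trans (s1.trans (s2.trans s3))
    · have hd : |pd (x + y) y| = 1 := by rw [pd_add_left]; exact h
      have hms : (x + y).2.natAbs + y.2.natAbs < n := by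
        simp only [Prod.snd_add]
        omega
      have c0 := ih _ hms (x + y) y hd le_rfl
      have hd2 : |pd y (x + y)| = 1 := by rw [pd_swap, abs_neg]; exact hd
      have s1 := L_swap hd
      have s2 := L_suby hd2
      rw [show x + y - y = x from by ring] at s2
      have hd3 : |pd y x| = 1 := by rw [pd_swap, abs_neg]; exact h
      have s3 := L_swap hd3
      exact c0.trans (s1.trans (s2.trans s3))

lemma conn_of_tri {u v w : FareyVertex} (h : Tri u v w) : Conn base (u, v, w) := by
  obtain ⟨x, hx, rfl⟩ := exists_mkv u
  obtain ⟨y, hy, rfl⟩ := exists_mkv v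
  have hxy : |pd x y| = 1 := (adj_mkv hx hy).mp h.1
  rcases common_v hxy h.2.1 h.2.2 with hw | hw
  · subst hw
    exact conn_main _ x y hxy le_rfl
  · subst hw
    have h2 : |pd x (-y)| = 1 := by rw [pd_neg_right, abs_neg]; exact hxy
    have := conn_main (x.2.natAbs + (-y).2.natAbs) x (-y) h2 le_rfl
    unfold TT at this
    rwa [mkv_neg, show x + -y = x - y from by ring] at this

section Good

variable {f : FareyVertex → FareyVertex}

/-- A triangle in the image of `f` coming from a triangle upstairs. -/
def Good (f : FareyVertex → FareyVertex) (u v w : FareyVertex) : Prop :=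
  ∃ a b c : FareyVertex, Tri a b c ∧ f a = u ∧ f b = v ∧ f c = w

lemma good_swap {u v w : FareyVertex} (h : Good f u v w) : Good f v u w := by
  obtain ⟨a, b, c, t, h1, h2, h3⟩ := h
  exact ⟨b, a, c, tri_swap12 t, h2, h1, h3⟩

lemma good_rot {u v w : FareyVertex} (h : Good f u v w) : Good f v w u := by
  obtain ⟨a, b, c, t, h1, h2, h3⟩ := h
  exact ⟨b, c, a, tri_rot t, h2, h3, h1⟩

lemma good_flip
    (hhom : ∀ u v : FareyVertex, FareyGraph.Adj u v → FareyGraph.Adj (f u) (f v))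
    (hinj : Function.Injective f)
    {u v w w' : FareyVertex} (ht' : Tri u v w') (hg : Good f u v w) :
    Good f u v w' := by
  obtain ⟨a, b, c, htri, rfl, rfl, rfl⟩ := hg
  by_cases hww : w' = f c
  · exact ⟨a, b, c, htri, rfl, rfl, hww.symm⟩
  obtain ⟨x, hx, rfl⟩ := exists_mkv a
  obtain ⟨y, hy, rfl⟩ := exists_mkv b
  have hxy : |pd x y| = 1 := (adj_mkv hx hy).mp htri.1
  have hne : mkv (x + y) ≠ mkv (x - y) := mkv_add_ne_sub hxy
  have hc : c = mkv (x + y) ∨ c = mkv (x - y) := common_v hxy htri.2.1 htri.2.2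
  -- define the other apex
  obtain ⟨c', tri', hcc⟩ : ∃ c', Tri (mkv x) (mkv y) c' ∧ c ≠ c' := by
    rcases hc with hc | hc
    · exact ⟨mkv (x - y), tri_mkv_sub hxy, by rw [hc]; exact hne⟩
    · exact ⟨mkv (x + y), tri_mkv hxy, by rw [hc]; exact hne.symm⟩
  have hfc : f c ≠ f c' := fun h => hcc (hinj h)
  obtain ⟨p, hp, hfa⟩ := exists_mkv (f (mkv x))
  obtain ⟨q, hq, hfb⟩ := exists_mkv (f (mkv y))
  have hadj_ab : FareyGraph.Adj (mkv p) (mkv q) := by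
    rw [← hfa, ← hfb]; exact hhom _ _ htri.1
  have hpq : |pd p q| = 1 := (adj_mkv hp hq).mp hadj_ab
  have m1 : f c = mkv (p + q) ∨ f c = mkv (p - q) := by
    apply common_v hpq
    · rw [← hfa]; exact hhom _ _ htri.2.1
    · rw [← hfb]; exact hhom _ _ htri.2.2
  have m2 : f c' = mkv (p + q) ∨ f c' = mkv (p - q) := by
    apply common_v hpq
    · rw [← hfa]; exact hhom _ _ tri'.2.1
    · rw [← hfb]; exact hhom _ _ tri'.2.2
  have m3 : w' = mkv (p + q) ∨ w' = mkv (p - q) := by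
    apply common_v hpq
    · rw [← hfa]; exact ht'.2.1
    · rw [← hfb]; exact ht'.2.2
  have hwc' : w' = f c' := by
    rcases m1 with h1 | h1 <;> rcases m2 with h2 | h2 <;> rcases m3 with h3 | h3 <;>
      first
        | (exfalso; exact hfc (h1.trans h2.symm))
        | (exfalso; exact hww (h3.trans h1.symm))
        | exact h3.trans h2.symm
  exact ⟨mkv x, mkv y, c', tri', rfl, rfl, hwc'.symm⟩

/-- `Good` is invariant along chains of triangles. -/
lemma good_conn
    (hhom : ∀ u v : FareyVertex, FareyGraph.Adj u v → FareyGraph.Adj (f u) (f v))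
    (hinj : Function.Injective f)
    {s t : FareyVertex × FareyVertex × FareyVertex} (h : Conn s t) :
    (Good f s.1 s.2.1 s.2.2 ↔ Good f t.1 t.2.1 t.2.2) := by
  induction h with
  | swap _ => exact ⟨good_swap, good_swap⟩
  | rot _ => exact ⟨good_rot, fun h => good_rot (good_rot h)⟩
  | flip t1 t2 => exact ⟨good_flip hhom hinj t2, good_flip hhom hinj t1⟩
  | refl => exact Iff.rfl
  | symm _ ih => exact ih.symm
  | trans _ _ ih1 ih2 => exact ih1.trans ih2

end Good

lemma exists_unimodular {x : ℤ × ℤ} (hx : IsCoprime x.1 x.2) :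
    ∃ y : ℤ × ℤ, |pd x y| = 1 := by
  obtain ⟨a, b, hab⟩ := hx
  refine ⟨(-b, a), ?_⟩
  rw [show pd x (-b, a) = a * x.1 + b * x.2 from by simp only [pd]; ring, hab]
  norm_num

end FareyAux

/-- Every injective graph homomorphism from the Farey graph to itself is
surjective. -/
theorem fareyGraph_injective_hom_surjective (f : FareyVertex → FareyVertex)
    (hhom : ∀ u v : FareyVertex, FareyGraph.Adj u v → FareyGraph.Adj (f u) (f v))
    (hinj : Function.Injective f) :
    Function.Surjective f := by
  intro z
  obtain ⟨x, hx, rfl⟩ := FareyAux.exists_mkv z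
  obtain ⟨y, hdet⟩ := FareyAux.exists_unimodular hx
  have htri := FareyAux.tri_mkv hdet
  have hb : |FareyAux.pd ((1:ℤ), (0:ℤ)) ((0:ℤ), (1:ℤ))| = 1 := by
    simp [FareyAux.pd]
  have basetri : FareyAux.Tri FareyAux.base.1 FareyAux.base.2.1 FareyAux.base.2.2 :=
    FareyAux.tri_mkv hb
  have g0 : FareyAux.Good f (f FareyAux.base.1) (f FareyAux.base.2.1)
      (f FareyAux.base.2.2) :=
    ⟨FareyAux.base.1, FareyAux.base.2.1, FareyAux.base.2.2, basetri, rfl, rfl, rfl⟩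
  have tfb : FareyAux.Tri (f FareyAux.base.1) (f FareyAux.base.2.1)
      (f FareyAux.base.2.2) :=
    ⟨hhom _ _ basetri.1, hhom _ _ basetri.2.1, hhom _ _ basetri.2.2⟩
  have c1 := FareyAux.conn_of_tri tfb
  have c2 := FareyAux.conn_of_tri htri
  have gb : FareyAux.Good f FareyAux.base.1 FareyAux.base.2.1 FareyAux.base.2.2 :=
    (FareyAux.good_conn hhom hinj c1).mpr g0
  have gt : FareyAux.Good f (FareyAux.mkv x) (FareyAux.mkv y)
      (FareyAux.mkv (x + y)) :=
    (FareyAux.good_conn hhom hinj c2).mp gb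
  obtain ⟨a, b, c, _, ha, _, _⟩ := gt
  exact ⟨a, ha⟩
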